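/- Let n ≥ 0, let α_0 = 1, and let 0 < α_j ≤ 1 for 1 ≤ j ≤ n. Define f(t) = ∑_{k=n}^∞ (−1)^{n+k} ∑_{(k_0,…,k_n) ∈ Θ^k_n} t^{k_0 + ∑_{j=1}^n k_j α_j} / Γ(1 + k_0 + ∑_{j=1}^n k_j α_j) for t ≥ 0. Then for every s > 1, ∫₀^∞ e^{−st} f(t) dt = 1 / ∏_{j=0}^n (1 + s^{α_j}); that is, f is the density of the convolution T = X_0 + X_1 + ⋯ + X_n of independent Mittag-Leffler random variables X_j with Pr{X_j > t} = E_{α_j}(−t^{α_j}). -/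

import Mathlib

open scoped BigOperators

/-- `Theta n k` is the set of tuples `(k_0, …, k_n)` of nonnegative integers with
`k_0 + ⋯ + k_n = k` and `k_j ≥ 1` for `1 ≤ j ≤ n`. -/
def Theta (n k : ℕ) : Finset (Fin (n + 1) → ℕ) :=
  (Finset.Nat.antidiagonalTuple (n + 1) k).filter
    (fun κ => ∀ j : Fin (n + 1), 1 ≤ j.val → 1 ≤ κ j)

section Aux

open MeasureTheory Real Set

lemma hasSum_pi_geometric : ∀ (m : ℕ) (y : Fin m → ℝ), (∀ i, |y i| < 1) →
    HasSum (fun g : Fin m → ℕ => ∏ i, y i ^ g i) (∏ i, (1 - y i)⁻¹) := by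
  intro m
  induction m with
  | zero =>
    intro y _
    have h := hasSum_fintype (fun g : Fin 0 → ℕ => ∏ i, y i ^ g i)
    simpa using h
  | succ m ih =>
    intro y hy
    have h0 : HasSum (fun k : ℕ => y 0 ^ k) (1 - y 0)⁻¹ :=
      hasSum_geometric_of_abs_lt_one (hy 0)
    have h1 := ih (fun i => y i.succ) (fun i => hy i.succ)
    have h0' : HasSum (fun k : ℕ => |y 0| ^ k) (1 - |y 0|)⁻¹ :=
      hasSum_geometric_of_abs_lt_one (by rw [abs_abs]; exact hy 0)
    have h1' := ih (fun i => |y i.succ|) (fun i => by rw [abs_abs]; exact hy i.succ)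
    have hsum : Summable (fun p : ℕ × (Fin m → ℕ) =>
        y 0 ^ p.1 * ∏ i, y i.succ ^ p.2 i) := by
      apply Summable.of_norm
      have := h0'.summable.mul_of_nonneg h1'.summable
        (fun k => by positivity) (fun g => by positivity)
      refine this.congr fun p => ?_
      simp [abs_mul, abs_pow, Finset.abs_prod]
    have hprod := h0.mul h1 hsum
    have he := (Fin.consEquiv (fun _ : Fin (m+1) => ℕ)).hasSum_iff
      (f := fun g : Fin (m+1) → ℕ => ∏ i, y i ^ g i)
      (a := (1 - y 0)⁻¹ * ∏ i : Fin m, (1 - y i.succ)⁻¹)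
    rw [Fin.prod_univ_succ]
    rw [← he]
    refine hprod.congr_fun fun p => ?_
    simp only [Function.comp_apply, Fin.consEquiv_apply]
    rw [Fin.prod_univ_succ]
    simp

lemma theta_sum_eq (n k : ℕ) {κ : Fin (n+1) → ℕ} (hκ : κ ∈ Theta n k) :
    ∑ j, κ j = k := by
  have := (Finset.mem_filter.mp hκ).1
  exact Finset.Nat.mem_antidiagonalTuple.mp this

lemma theta_pos (n k : ℕ) {κ : Fin (n+1) → ℕ} (hκ : κ ∈ Theta n k)
    {j : Fin (n+1)} (hj : 1 ≤ j.val) : 1 ≤ κ j :=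
  (Finset.mem_filter.mp hκ).2 j hj

lemma hasSum_theta (n : ℕ) (y : Fin (n+1) → ℝ) (hy : ∀ i, |y i| < 1) :
    HasSum (fun k : ℕ => ∑ κ ∈ Theta n k, ∏ j, y j ^ κ j)
      ((∏ j ∈ Finset.univ.erase (0 : Fin (n+1)), y j) * ∏ j, (1 - y j)⁻¹) := by
  classical
  set d : Fin (n+1) → ℕ := fun j => if j = 0 then 0 else 1 with hd
  have hmem : ∀ g : Fin (n+1) → ℕ,
      (fun j => g j + d j) ∈ Theta n (∑ j, (g j + d j)) := by
    intro g
    refine Finset.mem_filter.mpr ⟨Finset.Nat.mem_antidiagonalTuple.mpr rfl, ?_⟩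
    intro j hj
    have : j ≠ 0 := fun h => by simp [h] at hj
    simp [hd, this]
  set i : (Fin (n+1) → ℕ) → Σ k : ℕ, {x // x ∈ Theta n k} :=
    fun g => ⟨∑ j, (g j + d j), ⟨fun j => g j + d j, hmem g⟩⟩ with hi
  have hinj : Function.Injective i := by
    intro g g' h
    have h2 := congrArg (fun p : Σ k : ℕ, {x // x ∈ Theta n k} => (p.2 : Fin (n+1) → ℕ)) h
    funext j
    have := congrFun h2 j
    exact Nat.add_right_cancel this
  have hsurj : ∀ p : Σ k : ℕ, {x // x ∈ Theta n k}, p ∈ Set.range i := by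
    rintro ⟨k, κ, hκ⟩
    refine ⟨fun j => κ j - d j, ?_⟩
    have h1 : (fun j => (κ j - d j) + d j) = κ := by
      funext j
      by_cases h : j = 0
      · simp [hd, h]
      · have hj1 : 1 ≤ κ j := theta_pos n k hκ (by
          rcases Nat.eq_zero_or_pos j.val with h0 | h0
          · exact absurd (Fin.ext h0) h
          · exact h0)
        simp [hd, h, Nat.sub_add_cancel hj1]
    have hk : ∑ j, κ j = k := theta_sum_eq n k hκ
    subst hk
    have aux : ∀ (κ₁ κ₂ : Fin (n+1) → ℕ) (e : κ₁ = κ₂)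
        (h₁ : κ₁ ∈ Theta n (∑ j, κ₁ j)) (h₂ : κ₂ ∈ Theta n (∑ j, κ₂ j)),
        (⟨∑ j, κ₁ j, ⟨κ₁, h₁⟩⟩ : Σ k : ℕ, {x // x ∈ Theta n k}) = ⟨∑ j, κ₂ j, ⟨κ₂, h₂⟩⟩ := by
      rintro κ₁ κ₂ rfl h₁ h₂
      rfl
    exact aux _ _ h1 _ _
  have hbase := hasSum_pi_geometric (n+1) y hy
  have hc : HasSum (fun g : Fin (n+1) → ℕ => ∏ j, y j ^ (g j + d j))
      ((∏ j ∈ Finset.univ.erase (0 : Fin (n+1)), y j) * ∏ j, (1 - y j)⁻¹) := by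
    have := hbase.mul_left (∏ j ∈ Finset.univ.erase (0 : Fin (n+1)), y j)
    refine this.congr_fun fun g => ?_
    have hsplit : ∀ j : Fin (n+1), y j ^ (g j + d j) = y j ^ d j * y j ^ g j := by
      intro j; rw [pow_add, mul_comm]
    simp_rw [hsplit]
    rw [Finset.prod_mul_distrib]
    congr 1
    rw [← Finset.mul_prod_erase Finset.univ (fun j => y j ^ d j) (Finset.mem_univ 0)]
    simp only [hd, if_pos rfl, pow_zero, one_mul]
    refine Finset.prod_congr rfl fun j hj => ?_
    have : j ≠ 0 := (Finset.mem_erase.mp hj).1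
    simp [this]
  have hF : HasSum
      (fun p : Σ k : ℕ, {x // x ∈ Theta n k} => ∏ j, y j ^ ((p.2 : Fin (n+1) → ℕ) j))
      ((∏ j ∈ Finset.univ.erase (0 : Fin (n+1)), y j) * ∏ j, (1 - y j)⁻¹) := by
    rw [← hinj.hasSum_iff (by intro x hx; exact absurd (hsurj x) hx)]
    exact hc
  refine hF.sigma fun k => ?_
  have := hasSum_fintype (fun c : {x // x ∈ Theta n k} => ∏ j, y j ^ ((c : Fin (n+1) → ℕ) j))
  rwa [Finset.sum_coe_sort (Theta n k) (fun κ => ∏ j, y j ^ κ j)] at this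

lemma base_int {s b : ℝ} (hb : 0 ≤ b) (hs0 : 0 < s) :
    IntegrableOn (fun t : ℝ => t ^ b * Real.exp (-(s * t))) (Ioi 0) := by
  have h := integrableOn_rpow_mul_exp_neg_mul_rpow (show (-1:ℝ) < b by linarith) one_pos hs0
  refine h.congr_fun (fun t ht => ?_) measurableSet_Ioi
  dsimp only
  rw [Real.rpow_one, neg_mul]

lemma base_eq {s b : ℝ} (hb : 0 ≤ b) (hs0 : 0 < s) :
    ∫ t in Ioi (0:ℝ), t ^ b * Real.exp (-(s * t))
      = s ^ (-(1 + b)) * Real.Gamma (1 + b) := by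
  have h := Real.integral_rpow_mul_exp_neg_mul_Ioi (show (0:ℝ) < b + 1 by linarith) hs0
  simp only [add_sub_cancel_right] at h
  rw [h, one_div, Real.inv_rpow hs0.le, ← Real.rpow_neg hs0.le, add_comm b 1]

/-- The exponent appearing in the series. -/
def thBeta (n : ℕ) (α : ℕ → ℝ) (κ : Fin (n+1) → ℕ) : ℝ :=
  (κ 0 : ℝ) + ∑ j ∈ Finset.univ.erase (0 : Fin (n + 1)), (κ j : ℝ) * α j.val

end Aux
open MeasureTheory Real Set in
/-- The density of the convolution of `n + 1` independent rate-one Mittag-Leffler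
random variables of orders `1, α_1, …, α_n` has Laplace transform
`1 / ∏_{j=0}^n (1 + s^{α_j})`, where `α_0 = 1`. -/
theorem convolution_mittagLeffler_laplace (n : ℕ) (α : ℕ → ℝ) (hα0 : α 0 = 1)
    (hα : ∀ j, 1 ≤ j → j ≤ n → 0 < α j ∧ α j ≤ 1) :
    ∀ s : ℝ, 1 < s →
      ∫ t in Set.Ioi (0:ℝ),
          Real.exp (-(s * t)) *
            ∑' k : ℕ, (-1 : ℝ) ^ (n + k) *
              ∑ κ ∈ Theta n k,
                t ^ ((κ 0 : ℝ) + ∑ j ∈ Finset.univ.erase (0 : Fin (n + 1)),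
                      (κ j : ℝ) * α j.val)
                  / Real.Gamma (1 + (κ 0 : ℝ) + ∑ j ∈ Finset.univ.erase (0 : Fin (n + 1)),
                      (κ j : ℝ) * α j.val)
        = 1 / ∏ j ∈ Finset.range (n + 1), (1 + s ^ α j) := by
  intro s hs
  have hs0 : 0 < s := lt_trans one_pos hs
  have hαpos : ∀ j : Fin (n+1), 0 < α j.val := by
    intro j
    rcases Nat.eq_zero_or_pos j.val with h0 | h0
    · rw [h0, hα0]; norm_num
    · exact (hα j.val h0 (Nat.lt_succ_iff.mp j.isLt)).1
  have hβ : ∀ κ : Fin (n+1) → ℕ, 0 ≤ thBeta n α κ := fun κ =>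
    add_nonneg (Nat.cast_nonneg _) (Finset.sum_nonneg fun j _ =>
      mul_nonneg (Nat.cast_nonneg _) (hαpos j).le)
  have hΓ : ∀ κ : Fin (n+1) → ℕ, 0 < Real.Gamma (1 + thBeta n α κ) := fun κ =>
    Real.Gamma_pos_of_pos (by linarith [hβ κ])
  set x : Fin (n+1) → ℝ := fun j => s ^ (-(α j.val)) with hxdef
  have hx0 : ∀ j, 0 < x j := fun j => Real.rpow_pos_of_pos hs0 _
  have hx1 : ∀ j, x j < 1 := fun j =>
    Real.rpow_lt_one_of_one_lt_of_neg hs (neg_lt_zero.mpr (hαpos j))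
  have hx00 : x 0 = s⁻¹ := by
    simp only [hxdef, Fin.val_zero, hα0, Real.rpow_neg_one]
  have hprod_x : ∀ κ : Fin (n+1) → ℕ,
      s⁻¹ * ∏ j, x j ^ κ j = s ^ (-(1 + thBeta n α κ)) := by
    intro κ
    have hxk : ∀ j : Fin (n+1), x j ^ κ j = s ^ (-((κ j : ℝ) * α j.val)) := by
      intro j
      simp only [hxdef]
      rw [← Real.rpow_natCast (s ^ (-(α (j.val)))) (κ j), ← Real.rpow_mul hs0.le]
      congr 1; ring
    simp_rw [hxk]
    rw [← Real.rpow_sum_of_pos hs0, ← Real.rpow_neg_one s, ← Real.rpow_add hs0]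
    congr 1
    rw [← Finset.add_sum_erase _ _ (Finset.mem_univ (0:Fin (n+1)))]
    unfold thBeta
    rw [Fin.val_zero, hα0, Finset.sum_neg_distrib]
    ring
  set F : ℕ → ℝ → ℝ := fun k t => Real.exp (-(s*t)) *
      ((-1:ℝ)^(n+k) * ∑ κ ∈ Theta n k,
        t ^ thBeta n α κ / Real.Gamma (1 + thBeta n α κ)) with hFdef
  have hFexp : ∀ k, F k = fun t => ∑ κ ∈ Theta n k,
      ((-1:ℝ)^(n+k) * (Real.Gamma (1 + thBeta n α κ))⁻¹) *
        (t ^ thBeta n α κ * Real.exp (-(s*t))) := by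
    intro k
    funext t
    simp only [hFdef]
    rw [Finset.mul_sum, Finset.mul_sum]
    exact Finset.sum_congr rfl fun κ _ => by rw [div_eq_mul_inv]; ring
  have hF_int : ∀ k, IntegrableOn (F k) (Ioi 0) := by
    intro k
    rw [hFexp k]
    exact integrable_finset_sum _ fun κ _ => ((base_int (hβ κ) hs0).const_mul _)
  have hIthm : ∀ (c : ℝ) (k : ℕ),
      (∫ t in Ioi (0:ℝ), ∑ κ ∈ Theta n k,
        (c * (Real.Gamma (1 + thBeta n α κ))⁻¹) *
          (t ^ thBeta n α κ * Real.exp (-(s*t))))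
        = c * ∑ κ ∈ Theta n k, s ^ (-(1 + thBeta n α κ)) := by
    intro c k
    rw [integral_finset_sum _ (fun κ _ => ((base_int (hβ κ) hs0).const_mul _)),
      Finset.mul_sum]
    refine Finset.sum_congr rfl fun κ _ => ?_
    rw [integral_const_mul, base_eq (hβ κ) hs0]
    have hne := (hΓ κ).ne'
    field_simp
  have hnormint : ∀ k, (∫ t in Ioi (0:ℝ), ‖F k t‖)
      = s⁻¹ * ∑ κ ∈ Theta n k, ∏ j, x j ^ κ j := by
    intro k
    have h1 : (∫ t in Ioi (0:ℝ), ‖F k t‖)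
        = ∫ t in Ioi (0:ℝ), ∑ κ ∈ Theta n k,
            ((1:ℝ) * (Real.Gamma (1 + thBeta n α κ))⁻¹) *
              (t ^ thBeta n α κ * Real.exp (-(s*t))) := by
      refine setIntegral_congr_fun measurableSet_Ioi (fun t ht => ?_)
      have ht0 : (0:ℝ) < t := ht
      have hS : (0:ℝ) ≤ ∑ κ ∈ Theta n k,
          t ^ thBeta n α κ / Real.Gamma (1 + thBeta n α κ) :=
        Finset.sum_nonneg fun κ _ =>
          div_nonneg (Real.rpow_nonneg ht0.le _) (hΓ κ).le
      simp only [hFdef]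
      rw [Real.norm_eq_abs, abs_mul, abs_of_pos (Real.exp_pos _), abs_mul,
        abs_pow, abs_neg, abs_one, one_pow, one_mul, abs_of_nonneg hS,
        Finset.mul_sum]
      exact Finset.sum_congr rfl fun κ _ => by rw [div_eq_mul_inv]; ring
    rw [h1, hIthm 1 k, one_mul, Finset.mul_sum]
    exact Finset.sum_congr rfl fun κ _ => (hprod_x κ).symm
  have hsgn : ∀ k, ∑ κ ∈ Theta n k, ∏ j, x j ^ κ j
      = (-1:ℝ)^k * ∑ κ ∈ Theta n k, ∏ j, (-(x j)) ^ κ j := by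
    intro k
    rw [Finset.mul_sum]
    refine Finset.sum_congr rfl fun κ hκ => ?_
    have h1 : ∏ j, (-(x j)) ^ κ j = ((-1:ℝ)^k) * ∏ j, x j ^ κ j := by
      have hterm : ∀ j : Fin (n+1), (-(x j)) ^ κ j = (-1:ℝ) ^ κ j * x j ^ κ j := by
        intro j; rw [neg_pow]
      simp_rw [hterm]
      rw [Finset.prod_mul_distrib, Finset.prod_pow_eq_pow_sum, theta_sum_eq n k hκ]
    rw [h1, ← mul_assoc, ← pow_add, (Even.add_self k).neg_one_pow, one_mul]
  have hIk : ∀ k, (∫ t in Ioi (0:ℝ), F k t)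
      = (s⁻¹ * (-1:ℝ)^n) * ∑ κ ∈ Theta n k, ∏ j, (-(x j)) ^ κ j := by
    intro k
    have h2 : (∫ t in Ioi (0:ℝ), F k t) = (-1:ℝ)^(n+k) *
        ∑ κ ∈ Theta n k, s ^ (-(1 + thBeta n α κ)) := by
      rw [show (fun t => F k t) = F k from rfl, hFexp k]
      exact hIthm _ k
    have e1 : ∑ κ ∈ Theta n k, s ^ (-(1 + thBeta n α κ))
        = s⁻¹ * ∑ κ ∈ Theta n k, ∏ j, x j ^ κ j := by
      rw [Finset.mul_sum]
      exact Finset.sum_congr rfl fun κ _ => (hprod_x κ).symm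
    have e2 : ((-1:ℝ))^(n+k) * ((-1:ℝ))^k = (-1:ℝ)^n := by
      rw [← pow_add, add_assoc, pow_add, (Even.add_self k).neg_one_pow, mul_one]
    rw [h2, e1, hsgn k, ← e2]
    ring
  have hxabs : ∀ j, |(-(x j))| < 1 := fun j => by
    rw [abs_neg, abs_of_pos (hx0 j)]; exact hx1 j
  have hW := hasSum_theta n (fun j => -(x j)) hxabs
  have hV := hasSum_theta n x (fun j => by rw [abs_of_pos (hx0 j)]; exact hx1 j)
  have hF_sum : Summable (fun k => ∫ t in Ioi (0:ℝ), ‖F k t‖) :=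
    (hV.summable.mul_left s⁻¹).congr fun k => (hnormint k).symm
  have hBeq : ∀ κ : Fin (n+1) → ℕ,
      ((κ 0 : ℝ) + ∑ j ∈ Finset.univ.erase (0 : Fin (n + 1)), (κ j : ℝ) * α j.val)
        = thBeta n α κ := fun κ => rfl
  simp only [add_assoc]
  simp only [hBeq]
  have hintegrand : (∫ t in Ioi (0:ℝ), Real.exp (-(s*t)) *
        ∑' k : ℕ, (-1:ℝ)^(n+k) * ∑ κ ∈ Theta n k,
          t ^ thBeta n α κ / Real.Gamma (1 + thBeta n α κ))
      = ∫ t in Ioi (0:ℝ), ∑' k, F k t := by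
    refine setIntegral_congr_fun measurableSet_Ioi (fun t _ => ?_)
    simp only [hFdef]
    exact tsum_mul_left.symm
  rw [hintegrand, ← integral_tsum_of_summable_integral_norm hF_int hF_sum,
    tsum_congr hIk, ((hW.mul_left ((s⁻¹ * (-1:ℝ)^n))).tsum_eq)]
  -- final algebra
  have hprodneg : ∏ j ∈ Finset.univ.erase (0:Fin (n+1)), (-(x j))
      = (-1:ℝ)^n * ∏ j ∈ Finset.univ.erase (0:Fin (n+1)), x j := by
    rw [Finset.prod_congr rfl (fun (j : Fin (n+1)) _ => (by ring : -(x j) = (-1:ℝ) * x j)),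
      Finset.prod_mul_distrib, Finset.prod_const]
    congr 2
    rw [Finset.card_erase_of_mem (Finset.mem_univ _), Finset.card_univ]
    simp
  have hsub : ∀ j : Fin (n+1), (1:ℝ) - -(x j) = 1 + x j := fun j => by ring
  have hxinv : ∀ j : Fin (n+1), x j * (1 + x j)⁻¹ = (1 + s ^ α j.val)⁻¹ := by
    intro j
    have ha : (0:ℝ) < s ^ α j.val := Real.rpow_pos_of_pos hs0 _
    have hxj : x j = (s ^ α j.val)⁻¹ := by
      simp only [hxdef]; exact Real.rpow_neg hs0.le _
    have h1 : (1:ℝ) + s ^ α j.val ≠ 0 := by positivity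
    have h2 : (1:ℝ) + (s ^ α j.val)⁻¹ ≠ 0 := by positivity
    rw [hxj]
    rw [← mul_inv]
    congr 1
    field_simp
    ring
  simp only [hsub]
  rw [hprodneg]
  rw [← Fin.prod_univ_eq_prod_range (fun j => 1 + s ^ α j) (n+1), one_div,
    ← Finset.prod_inv_distrib]
  have hR : ∏ j : Fin (n+1), (1 + s ^ α j.val)⁻¹
      = (∏ j : Fin (n+1), x j) * ∏ j : Fin (n+1), (1 + x j)⁻¹ := by
    rw [← Finset.prod_mul_distrib]
    exact Finset.prod_congr rfl fun j _ => (hxinv j).symm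
  have hsx : s⁻¹ * ∏ j ∈ Finset.univ.erase (0:Fin (n+1)), x j = ∏ j : Fin (n+1), x j := by
    rw [← hx00]
    exact Finset.mul_prod_erase _ _ (Finset.mem_univ 0)
  rw [hR, ← hsx]
  have hneg1 : ((-1:ℝ))^n * ((-1:ℝ))^n = 1 := by
    rw [← pow_add]; exact (Even.add_self n).neg_one_pow
  linear_combination (s⁻¹ * (∏ j ∈ Finset.univ.erase (0:Fin (n+1)), x j) *
    (∏ j : Fin (n+1), (1 + x j)⁻¹)) * hneg1
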